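/- Discrete Hodge decomposition in degree 1 (Proposition 3.4, r = 1): the space of discrete 1-forms on the periodic grid is the internal direct sum of the three subspaces range(d⁰), range(δ²) and ker(Δ¹), and these three subspaces are pairwise orthogonal with respect to the inner product on 1-forms; equivalently, every discrete 1-form ω can be written uniquely as ω = d⁰φ-part + δ²ψ-part + h with the first summand in range(d⁰), the second in range(δ²), and Δ¹h = 0. -/

import Mathlib

/-- Discrete 0-forms on the periodic grid `ZMod N × ZMod M`. -/
abbrev Form0 (N M : ℕ) := ZMod N × ZMod M → ℝ
/-- Discrete 1-forms on the periodic grid `ZMod N × ZMod M`: pairs of functions. -/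
abbrev Form1 (N M : ℕ) := (ZMod N × ZMod M → ℝ) × (ZMod N × ZMod M → ℝ)
/-- Discrete 2-forms on the periodic grid `ZMod N × ZMod M`. -/
abbrev Form2 (N M : ℕ) := ZMod N × ZMod M → ℝ

/-- Discrete exterior derivative on 0-forms. -/
def d0 (N M : ℕ) : Form0 N M →ₗ[ℝ] Form1 N M where
  toFun φ := (fun p => φ (p.1 + 1, p.2) - φ p, fun p => φ (p.1, p.2 + 1) - φ p)
  map_add' φ ψ := by refine Prod.ext ?_ ?_ <;> funext p <;> simp <;> ring
  map_smul' c φ := by refine Prod.ext ?_ ?_ <;> funext p <;> simp <;> ring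

/-- Discrete exterior derivative on 1-forms. -/
def d1 (N M : ℕ) : Form1 N M →ₗ[ℝ] Form2 N M where
  toFun ω := fun p => (ω.2 (p.1 + 1, p.2) - ω.2 p) - (ω.1 (p.1, p.2 + 1) - ω.1 p)
  map_add' ω η := by funext p; simp; ring
  map_smul' c ω := by funext p; simp; ring

/-- Discrete codifferential on 1-forms. -/
def delta1 (N M : ℕ) : Form1 N M →ₗ[ℝ] Form0 N M where
  toFun ω := fun p => (ω.1 (p.1 - 1, p.2) - ω.1 p) + (ω.2 (p.1, p.2 - 1) - ω.2 p)
  map_add' ω η := by funext p; simp; ring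
  map_smul' c ω := by funext p; simp; ring

/-- Discrete codifferential on 2-forms. -/
def delta2 (N M : ℕ) : Form2 N M →ₗ[ℝ] Form1 N M where
  toFun ψ := (fun p => ψ p - ψ (p.1, p.2 - 1), fun p => ψ (p.1 - 1, p.2) - ψ p)
  map_add' ψ χ := by refine Prod.ext ?_ ?_ <;> funext p <;> simp <;> ring
  map_smul' c ψ := by refine Prod.ext ?_ ?_ <;> funext p <;> simp <;> ring

/-- Discrete Laplacian on 0-forms: `Δ⁰ = δ¹ ∘ d⁰`. -/
def lap0 (N M : ℕ) : Form0 N M →ₗ[ℝ] Form0 N M := delta1 N M ∘ₗ d0 N M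
/-- Discrete Laplacian on 1-forms: `Δ¹ = d⁰ ∘ δ¹ + δ² ∘ d¹`. -/
def lap1 (N M : ℕ) : Form1 N M →ₗ[ℝ] Form1 N M :=
  d0 N M ∘ₗ delta1 N M + delta2 N M ∘ₗ d1 N M
/-- Discrete Laplacian on 2-forms: `Δ² = d¹ ∘ δ²`. -/
def lap2 (N M : ℕ) : Form2 N M →ₗ[ℝ] Form2 N M := d1 N M ∘ₗ delta2 N M

/-- Inner product of two 0-forms (or two 2-forms). -/
def inner0 (N M : ℕ) [NeZero N] [NeZero M] (φ ψ : Form0 N M) : ℝ := ∑ p, φ p * ψ p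
/-- Inner product of two 1-forms. -/
def inner1 (N M : ℕ) [NeZero N] [NeZero M] (ω η : Form1 N M) : ℝ :=
  ∑ p, (ω.1 p * η.1 p + ω.2 p * η.2 p)


section Aux
variable {N M : ℕ} [NeZero N] [NeZero M]

lemma sum_comp_equiv {α : Type*} [Fintype α] (e : α ≃ α) (F : α → ℝ) :
    ∑ p, F (e p) = ∑ p, F p :=
  Fintype.sum_equiv e _ _ fun _ => rfl

lemma shiftA (F : ZMod N × ZMod M → ℝ) :
    ∑ p : ZMod N × ZMod M, F (p.1 + 1, p.2) = ∑ p, F p := by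
  exact sum_comp_equiv (Equiv.prodCongr (Equiv.addRight (1 : ZMod N)) (Equiv.refl (ZMod M))) F

lemma shiftB (F : ZMod N × ZMod M → ℝ) :
    ∑ p : ZMod N × ZMod M, F (p.1, p.2 + 1) = ∑ p, F p := by
  exact sum_comp_equiv (Equiv.prodCongr (Equiv.refl (ZMod N)) (Equiv.addRight (1 : ZMod M))) F

lemma adj_d0 (φ : Form0 N M) (ω : Form1 N M) :
    inner1 N M (d0 N M φ) ω = inner0 N M φ (delta1 N M ω) := by
  simp only [inner1, inner0, d0, delta1, LinearMap.coe_mk, AddHom.coe_mk]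
  have e1 : ∑ p : ZMod N × ZMod M, φ (p.1 + 1, p.2) * ω.1 p
      = ∑ p, φ p * ω.1 (p.1 - 1, p.2) := by
    have := shiftA (fun p => φ p * ω.1 (p.1 - 1, p.2))
    simpa using this
  have e2 : ∑ p : ZMod N × ZMod M, φ (p.1, p.2 + 1) * ω.2 p
      = ∑ p, φ p * ω.2 (p.1, p.2 - 1) := by
    have := shiftB (fun p => φ p * ω.2 (p.1, p.2 - 1))
    simpa using this
  calc ∑ p : ZMod N × ZMod M, ((φ (p.1+1, p.2) - φ p) * ω.1 p + (φ (p.1, p.2+1) - φ p) * ω.2 p)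
      = ∑ p : ZMod N × ZMod M, (φ (p.1+1, p.2) * ω.1 p + φ (p.1, p.2+1) * ω.2 p
          - (φ p * ω.1 p + φ p * ω.2 p)) := by
        apply Finset.sum_congr rfl; intros; ring
    _ = (∑ p : ZMod N × ZMod M, φ (p.1+1, p.2) * ω.1 p)
          + (∑ p : ZMod N × ZMod M, φ (p.1, p.2+1) * ω.2 p)
          - ∑ p : ZMod N × ZMod M, (φ p * ω.1 p + φ p * ω.2 p) := by
        rw [Finset.sum_sub_distrib, Finset.sum_add_distrib]
    _ = (∑ p : ZMod N × ZMod M, φ p * ω.1 (p.1 - 1, p.2))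
          + (∑ p : ZMod N × ZMod M, φ p * ω.2 (p.1, p.2 - 1))
          - ∑ p : ZMod N × ZMod M, (φ p * ω.1 p + φ p * ω.2 p) := by rw [e1, e2]
    _ = ∑ p : ZMod N × ZMod M, (φ p * ω.1 (p.1 - 1, p.2) + φ p * ω.2 (p.1, p.2 - 1)
          - (φ p * ω.1 p + φ p * ω.2 p)) := by
        rw [Finset.sum_sub_distrib, Finset.sum_add_distrib, Finset.sum_add_distrib]
    _ = ∑ p : ZMod N × ZMod M,
          φ p * ((ω.1 (p.1 - 1, p.2) - ω.1 p) + (ω.2 (p.1, p.2 - 1) - ω.2 p)) := by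
        apply Finset.sum_congr rfl; intros; ring

lemma adj_delta2 (ψ : Form2 N M) (ω : Form1 N M) :
    inner1 N M (delta2 N M ψ) ω = inner0 N M ψ (d1 N M ω) := by
  simp only [inner1, inner0, delta2, d1, LinearMap.coe_mk, AddHom.coe_mk]
  have e1 : ∑ p : ZMod N × ZMod M, ψ p * ω.1 (p.1, p.2 + 1)
      = ∑ p, ψ (p.1, p.2 - 1) * ω.1 p := by
    have := shiftB (fun p => ψ (p.1, p.2 - 1) * ω.1 p)
    simpa using this
  have e2 : ∑ p : ZMod N × ZMod M, ψ p * ω.2 (p.1 + 1, p.2)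
      = ∑ p, ψ (p.1 - 1, p.2) * ω.2 p := by
    have := shiftA (fun p => ψ (p.1 - 1, p.2) * ω.2 p)
    simpa using this
  calc ∑ p : ZMod N × ZMod M,
        ((ψ p - ψ (p.1, p.2 - 1)) * ω.1 p + (ψ (p.1 - 1, p.2) - ψ p) * ω.2 p)
      = ∑ p : ZMod N × ZMod M, (ψ p * ω.1 p + ψ (p.1 - 1, p.2) * ω.2 p
          - (ψ (p.1, p.2 - 1) * ω.1 p + ψ p * ω.2 p)) := by
        apply Finset.sum_congr rfl; intros; ring
    _ = (∑ p : ZMod N × ZMod M, ψ p * ω.1 p)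
          + (∑ p : ZMod N × ZMod M, ψ (p.1 - 1, p.2) * ω.2 p)
          - ((∑ p : ZMod N × ZMod M, ψ (p.1, p.2 - 1) * ω.1 p)
            + ∑ p : ZMod N × ZMod M, ψ p * ω.2 p) := by
        rw [Finset.sum_sub_distrib, Finset.sum_add_distrib, Finset.sum_add_distrib]
    _ = (∑ p : ZMod N × ZMod M, ψ p * ω.1 p)
          + (∑ p : ZMod N × ZMod M, ψ p * ω.2 (p.1 + 1, p.2))
          - ((∑ p : ZMod N × ZMod M, ψ p * ω.1 (p.1, p.2 + 1))
            + ∑ p : ZMod N × ZMod M, ψ p * ω.2 p) := by rw [e1, e2]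
    _ = ∑ p : ZMod N × ZMod M, (ψ p * ω.1 p + ψ p * ω.2 (p.1 + 1, p.2)
          - (ψ p * ω.1 (p.1, p.2 + 1) + ψ p * ω.2 p)) := by
        rw [Finset.sum_sub_distrib, Finset.sum_add_distrib, Finset.sum_add_distrib]
    _ = ∑ p : ZMod N × ZMod M,
          ψ p * ((ω.2 (p.1 + 1, p.2) - ω.2 p) - (ω.1 (p.1, p.2 + 1) - ω.1 p)) := by
        apply Finset.sum_congr rfl; intros; ring

lemma delta1_delta2 (ψ : Form2 N M) : delta1 N M (delta2 N M ψ) = 0 := by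
  funext p
  simp only [delta1, delta2, LinearMap.coe_mk, AddHom.coe_mk, Pi.zero_apply]
  ring

lemma inner0_zero_right (φ : Form0 N M) : inner0 N M φ 0 = 0 := by
  simp [inner0]

lemma inner0_self_nonneg (φ : Form0 N M) : 0 ≤ inner0 N M φ φ :=
  Finset.sum_nonneg fun p _ => mul_self_nonneg _

lemma inner0_self_eq_zero {φ : Form0 N M} (h : inner0 N M φ φ = 0) : φ = 0 := by
  funext p
  have h2 := (Finset.sum_eq_zero_iff_of_nonneg
    (fun p _ => mul_self_nonneg (φ p))).mp h p (Finset.mem_univ p)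
  have := mul_self_eq_zero.mp h2
  simpa using this

lemma inner1_comm (ω η : Form1 N M) : inner1 N M ω η = inner1 N M η ω := by
  apply Finset.sum_congr rfl; intros; ring

lemma inner1_add_left (a b c : Form1 N M) :
    inner1 N M (a + b) c = inner1 N M a c + inner1 N M b c := by
  simp only [inner1, Prod.fst_add, Prod.snd_add, Pi.add_apply, ← Finset.sum_add_distrib]
  apply Finset.sum_congr rfl; intros; ring

lemma inner1_self_nonneg (ω : Form1 N M) : 0 ≤ inner1 N M ω ω :=
  Finset.sum_nonneg fun p _ => add_nonneg (mul_self_nonneg _) (mul_self_nonneg _)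

lemma inner1_self_eq_zero {ω : Form1 N M} (h : inner1 N M ω ω = 0) : ω = 0 := by
  have h2 := (Finset.sum_eq_zero_iff_of_nonneg
    (fun p _ => add_nonneg (mul_self_nonneg (ω.1 p)) (mul_self_nonneg (ω.2 p)))).mp h
  have hz : ∀ p : ZMod N × ZMod M, ω.1 p = 0 ∧ ω.2 p = 0 := by
    intro p
    have := h2 p (Finset.mem_univ p)
    constructor
    · nlinarith [mul_self_nonneg (ω.1 p), mul_self_nonneg (ω.2 p)]
    · nlinarith [mul_self_nonneg (ω.1 p), mul_self_nonneg (ω.2 p)]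
  refine Prod.ext (funext fun p => (hz p).1) (funext fun p => (hz p).2)

lemma lap1_apply (ω : Form1 N M) :
    lap1 N M ω = d0 N M (delta1 N M ω) + delta2 N M (d1 N M ω) := rfl

lemma lap1_inner (ω η : Form1 N M) :
    inner1 N M (lap1 N M ω) η
      = inner0 N M (delta1 N M ω) (delta1 N M η) + inner0 N M (d1 N M ω) (d1 N M η) := by
  rw [lap1_apply, inner1_add_left, adj_d0, adj_delta2]

lemma mem_ker_lap1_iff {ω : Form1 N M} :
    lap1 N M ω = 0 ↔ delta1 N M ω = 0 ∧ d1 N M ω = 0 := by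
  constructor
  · intro h
    have h0 : inner0 N M (delta1 N M ω) (delta1 N M ω)
        + inner0 N M (d1 N M ω) (d1 N M ω) = 0 := by
      rw [← lap1_inner, h]
      simp [inner1]
    have h1 : inner0 N M (delta1 N M ω) (delta1 N M ω) = 0 := by
      have := inner0_self_nonneg (N := N) (M := M) (delta1 N M ω)
      have := inner0_self_nonneg (N := N) (M := M) (d1 N M ω)
      linarith
    have h2 : inner0 N M (d1 N M ω) (d1 N M ω) = 0 := by
      have := inner0_self_nonneg (N := N) (M := M) (delta1 N M ω)
      linarith
    exact ⟨inner0_self_eq_zero h1, inner0_self_eq_zero h2⟩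
  · rintro ⟨h1, h2⟩
    rw [lap1_apply, h1, h2]
    simp

lemma orth_d0_delta2 (φ : Form0 N M) (ψ : Form2 N M) :
    inner1 N M (d0 N M φ) (delta2 N M ψ) = 0 := by
  rw [adj_d0, delta1_delta2, inner0_zero_right]

lemma orth_d0_ker (φ : Form0 N M) {h : Form1 N M} (hh : lap1 N M h = 0) :
    inner1 N M (d0 N M φ) h = 0 := by
  rw [adj_d0, (mem_ker_lap1_iff.mp hh).1, inner0_zero_right]

lemma orth_delta2_ker (ψ : Form2 N M) {h : Form1 N M} (hh : lap1 N M h = 0) :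
    inner1 N M (delta2 N M ψ) h = 0 := by
  rw [adj_delta2, (mem_ker_lap1_iff.mp hh).2, inner0_zero_right]

lemma inner1_zero_right (ω : Form1 N M) : inner1 N M ω 0 = 0 := by
  simp [inner1]

lemma inner1_add_right (a b c : Form1 N M) :
    inner1 N M a (b + c) = inner1 N M a b + inner1 N M a c := by
  rw [inner1_comm, inner1_add_left, inner1_comm b a, inner1_comm c a]

lemma triple_zero {a b h : Form1 N M}
    (ha : a ∈ LinearMap.range (d0 N M)) (hb : b ∈ LinearMap.range (delta2 N M))
    (hh : h ∈ LinearMap.ker (lap1 N M)) (hsum : a + b + h = 0) :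
    a = 0 ∧ b = 0 ∧ h = 0 := by
  obtain ⟨φ, rfl⟩ := ha
  obtain ⟨ψ, rfl⟩ := hb
  have hk : lap1 N M h = 0 := hh
  have ha0 : d0 N M φ = 0 := by
    apply inner1_self_eq_zero
    have h0 : inner1 N M (d0 N M φ) (d0 N M φ + delta2 N M ψ + h) = 0 := by
      rw [hsum, inner1_zero_right]
    rwa [inner1_add_right, inner1_add_right, orth_d0_delta2, orth_d0_ker φ hk,
      add_zero, add_zero] at h0
  have hb0 : delta2 N M ψ = 0 := by
    apply inner1_self_eq_zero
    have h0 : inner1 N M (delta2 N M ψ) (d0 N M φ + delta2 N M ψ + h) = 0 := by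
      rw [hsum, inner1_zero_right]
    rwa [inner1_add_right, inner1_add_right, inner1_comm _ (d0 N M φ), orth_d0_delta2,
      orth_delta2_ker ψ hk, zero_add, add_zero] at h0
  refine ⟨ha0, hb0, ?_⟩
  rw [ha0, hb0] at hsum
  simpa using hsum

lemma range_sup_ker_eq_top :
    LinearMap.range (lap1 N M) ⊔ LinearMap.ker (lap1 N M) = ⊤ := by
  have hdisj : LinearMap.range (lap1 N M) ⊓ LinearMap.ker (lap1 N M) = ⊥ := by
    rw [Submodule.eq_bot_iff]
    rintro y ⟨⟨x, rfl⟩, hy⟩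
    have hk : lap1 N M (lap1 N M x) = 0 := hy
    apply inner1_self_eq_zero
    rw [lap1_inner, (mem_ker_lap1_iff.mp hk).1, (mem_ker_lap1_iff.mp hk).2,
      inner0_zero_right, inner0_zero_right, add_zero]
  apply Submodule.eq_top_of_finrank_eq
  have h1 := Submodule.finrank_sup_add_finrank_inf_eq
    (LinearMap.range (lap1 N M)) (LinearMap.ker (lap1 N M))
  have h2 := LinearMap.finrank_range_add_finrank_ker (lap1 N M)
  rw [hdisj] at h1
  simp only [finrank_bot, add_zero] at h1
  omega

end Aux
/-- **Discrete Hodge decomposition in degree 1** (Proposition 3.4, `r = 1`): the subspaces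
`range(d⁰)`, `range(δ²)` and `ker(Δ¹)` of the space of discrete 1-forms on the periodic grid
are pairwise orthogonal, and every discrete 1-form decomposes uniquely as a sum of an element
of `range(d⁰)`, an element of `range(δ²)`, and a harmonic 1-form. -/
theorem discrete_hodge_decomposition_deg1 (N M : ℕ) [NeZero N] [NeZero M] :
    (∀ a ∈ LinearMap.range (d0 N M), ∀ b ∈ LinearMap.range (delta2 N M),
        inner1 N M a b = 0) ∧
    (∀ a ∈ LinearMap.range (d0 N M), ∀ h ∈ LinearMap.ker (lap1 N M),
        inner1 N M a h = 0) ∧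
    (∀ b ∈ LinearMap.range (delta2 N M), ∀ h ∈ LinearMap.ker (lap1 N M),
        inner1 N M b h = 0) ∧
    ∀ ω : Form1 N M,
      ∃! x : LinearMap.range (d0 N M) × LinearMap.range (delta2 N M) ×
          LinearMap.ker (lap1 N M),
        ω = (x.1 : Form1 N M) + (x.2.1 : Form1 N M) + (x.2.2 : Form1 N M) := by
  refine ⟨?_, ?_, ?_, ?_⟩
  · rintro a ⟨φ, rfl⟩ b ⟨ψ, rfl⟩
    exact orth_d0_delta2 φ ψ
  · rintro a ⟨φ, rfl⟩ h hh
    exact orth_d0_ker φ (LinearMap.mem_ker.mp hh)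
  · rintro b ⟨ψ, rfl⟩ h hh
    exact orth_delta2_ker ψ (LinearMap.mem_ker.mp hh)
  · intro ω
    have hsup : ω ∈ LinearMap.range (lap1 N M) ⊔ LinearMap.ker (lap1 N M) := by
      rw [range_sup_ker_eq_top]; trivial
    obtain ⟨y, hy, z, hz, hyz⟩ := Submodule.mem_sup.mp hsup
    obtain ⟨x, rfl⟩ := hy
    refine ⟨(⟨d0 N M (delta1 N M x), ⟨_, rfl⟩⟩,
            ⟨delta2 N M (d1 N M x), ⟨_, rfl⟩⟩, ⟨z, hz⟩), ?_, ?_⟩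
    · show ω = d0 N M (delta1 N M x) + delta2 N M (d1 N M x) + z
      rw [← hyz, lap1_apply]
    · rintro ⟨⟨a, ha⟩, ⟨b, hb⟩, ⟨h, hh⟩⟩ heq
      simp only at heq
      have heq2 : ω = d0 N M (delta1 N M x) + delta2 N M (d1 N M x) + z := by
        rw [← hyz, lap1_apply]
      have hsum : (a - d0 N M (delta1 N M x)) + (b - delta2 N M (d1 N M x)) + (h - z) = 0 := by
        have : a + b + h = d0 N M (delta1 N M x) + delta2 N M (d1 N M x) + z := by
          rw [← heq, ← heq2]
        calc (a - d0 N M (delta1 N M x)) + (b - delta2 N M (d1 N M x)) + (h - z)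
            = (a + b + h) - (d0 N M (delta1 N M x) + delta2 N M (d1 N M x) + z) := by abel
          _ = 0 := by rw [this, sub_self]
      obtain ⟨e1, e2, e3⟩ := triple_zero
        (Submodule.sub_mem _ ha ⟨_, rfl⟩)
        (Submodule.sub_mem _ hb ⟨_, rfl⟩)
        (Submodule.sub_mem _ hh hz) hsum
      refine Prod.ext (Subtype.ext (sub_eq_zero.mp e1))
        (Prod.ext (Subtype.ext (sub_eq_zero.mp e2)) (Subtype.ext (sub_eq_zero.mp e3)))
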